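/- Let X = ⋃_{k≥1} (A_k ∪ B_{k+1}) ⊆ ℝ², where A_k = [k,∞) × {k} and B_k = {k} × [k−1,k], let d_e be the Euclidean metric on X and d the path metric on X. Then the countable collection {A_k}_{k≥1} is gradually disjoint in (X,d), while in (X,d_e) the collection {A_k}_{k≥1} does not diverge, i.e., no finite subcollection of {A_k}_{k≥1} diverges in (X,d_e). -/

import Mathlib

open Metric Bornology Function Set

/-- A map between metric spaces is (coarsely) proper if preimages of bounded
sets are bounded. -/
def MetricallyProper {X Y : Type*} [MetricSpace X] [MetricSpace Y] (f : X → Y) : Prop :=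
  ∀ B : Set Y, IsBounded B → IsBounded (f ⁻¹' B)

/-- A coarse map: proper, and uniformly bornologous. -/
def CoarseMap {X Y : Type*} [MetricSpace X] [MetricSpace Y] (f : X → Y) : Prop :=
  MetricallyProper f ∧
    ∀ R > (0:ℝ), ∃ S > (0:ℝ), ∀ x x' : X, dist x x' ≤ R → dist (f x) (f x') ≤ S

/-- Coarsely surjective map. -/
def CoarselySurjective {X Y : Type*} [MetricSpace X] [MetricSpace Y] (f : X → Y) : Prop :=
  ∃ R > (0:ℝ), ∀ y : Y, ∃ x : X, dist y (f x) ≤ R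

/-- `f` is coarsely `n`-to-1. -/
def CoarselyNTo1 {X Y : Type*} [MetricSpace X] [MetricSpace Y] (f : X → Y) (n : ℕ) : Prop :=
  ∀ R > (0:ℝ), ∃ S > (0:ℝ), ∀ A : Set Y, (∀ y ∈ A, ∀ y' ∈ A, dist y y' ≤ R) →
    ∃ V : Fin n → Set X, (∀ i, ∀ x ∈ V i, ∀ x' ∈ V i, dist x x' ≤ S) ∧ f ⁻¹' A ⊆ ⋃ i, V i

/-- `f` is coarsely finite-to-1. -/
def CoarselyFiniteTo1 {X Y : Type*} [MetricSpace X] [MetricSpace Y] (f : X → Y) : Prop :=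
  ∀ R > (0:ℝ), ∃ S > (0:ℝ), ∃ m : ℕ, ∀ A : Set Y, (∀ y ∈ A, ∀ y' ∈ A, dist y y' ≤ R) →
    ∃ V : Fin m → Set X, (∀ i, ∀ x ∈ V i, ∀ x' ∈ V i, dist x x' ≤ S) ∧ f ⁻¹' A ⊆ ⋃ i, V i

/-- Two maps are close. -/
def Close {X Y : Type*} [MetricSpace X] [MetricSpace Y] (f g : X → Y) : Prop :=
  ∃ R > (0:ℝ), ∀ x : X, dist (f x) (g x) ≤ R

/-- `f` is a coarse equivalence. -/
def CoarseEquivalence {X Y : Type*} [MetricSpace X] [MetricSpace Y] (f : X → Y) : Prop :=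
  CoarseMap f ∧ ∃ g : Y → X, CoarseMap g ∧ Close (f ∘ g) id ∧ Close (g ∘ f) id

/-- `X` and `Y` are coarsely equivalent. -/
def CoarselyEquivalent (X Y : Type*) [MetricSpace X] [MetricSpace Y] : Prop :=
  ∃ f : X → Y, CoarseEquivalence f

/-- A family of subsets is uniformly bounded. -/
def UnifBounded {X : Type*} [MetricSpace X] (𝒰 : Set (Set X)) : Prop :=
  ∃ S : ℝ, ∀ U ∈ 𝒰, ∀ x ∈ U, ∀ y ∈ U, dist x y ≤ S

/-- A family of subsets is `R`-disjoint: distinct members lie at distance `> R`. -/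
def RDisjointFam {X : Type*} [MetricSpace X] (𝒰 : Set (Set X)) (R : ℝ) : Prop :=
  ∀ U ∈ 𝒰, ∀ V ∈ 𝒰, U ≠ V → ∀ x ∈ U, ∀ y ∈ V, R < dist x y

/-- `asdim X ≤ n`. -/
def ASDimLE (X : Type*) [MetricSpace X] (n : ℕ) : Prop :=
  ∀ R > (0:ℝ), ∃ 𝒰 : Fin (n + 1) → Set (Set X),
    (∀ i, UnifBounded (𝒰 i)) ∧ (∀ i, RDisjointFam (𝒰 i) R) ∧
      ∀ x : X, ∃ i, ∃ U ∈ 𝒰 i, x ∈ U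

/-- The asymptotic dimension of `X`, valued in `ℕ∞`. -/
noncomputable def asdim (X : Type*) [MetricSpace X] : ℕ∞ :=
  sInf {n : ℕ∞ | ∃ m : ℕ, n = (m : ℕ∞) ∧ ASDimLE X m}

/-- TI-increasing functions `[0,∞) → [0,∞)`. -/
def TIIncreasing (ρ : NNReal → NNReal) : Prop :=
  Monotone ρ ∧ Filter.Tendsto ρ Filter.atTop Filter.atTop

/-- The variable-radius neighborhood `N(A, ρ)` with respect to a basepoint `x₀`. -/
def GrowNbhd {X : Type*} [MetricSpace X] (x₀ : X) (A : Set X) (ρ : NNReal → NNReal) : Set X :=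
  {x' | ∃ x ∈ A, nndist x' x ≤ ρ (nndist x x₀)}

/-- `f` is coarsely open (with respect to basepoints `x₀`, `y₀`). -/
def CoarselyOpen {X Y : Type*} [MetricSpace X] [MetricSpace Y] (f : X → Y)
    (x₀ : X) (y₀ : Y) : Prop :=
  ∀ A : Set X, ¬ IsBounded A → ∀ ρ : NNReal → NNReal, TIIncreasing ρ →
    ∃ ρ' : NNReal → NNReal, TIIncreasing ρ' ∧
      GrowNbhd y₀ (f '' A) ρ' ⊆ f '' GrowNbhd x₀ A ρ

/-- `N(A, R)`, the closed `R`-neighborhood of `A`. -/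
def NbhdR {X : Type*} [MetricSpace X] (A : Set X) (R : ℝ) : Set X :=
  {x | ∃ a ∈ A, dist x a ≤ R}

/-- A finite collection of subsets is gradually disjoint. -/
def GraduallyDisjoint {X : Type*} [MetricSpace X] {k : ℕ} (A : Fin k → Set X) : Prop :=
  ∀ R > (0:ℝ), ∃ B : Set X, IsBounded B ∧
    ∀ i j, i ≠ j → Disjoint (NbhdR (A i) R \ B) (NbhdR (A j) R \ B)

/-- A finite collection of subsets diverges. -/
def Diverges {X : Type*} [MetricSpace X] {k : ℕ} (A : Fin k → Set X) : Prop :=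
  ∀ R > (0:ℝ), IsBounded (⋂ i, NbhdR (A i) R)

/-- A countable collection of subsets is gradually disjoint: every finite
subcollection is. -/
def GraduallyDisjointSeq {X : Type*} [MetricSpace X] (A : ℕ → Set X) : Prop :=
  ∀ s : Finset ℕ, ∀ R > (0:ℝ), ∃ B : Set X, IsBounded B ∧
    ∀ i ∈ s, ∀ j ∈ s, i ≠ j → Disjoint (NbhdR (A i) R \ B) (NbhdR (A j) R \ B)

/-- A countable collection of subsets diverges: some finite subcollection diverges. -/
def DivergesSeq {X : Type*} [MetricSpace X] (A : ℕ → Set X) : Prop :=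
  ∃ s : Finset ℕ, ∀ R > (0:ℝ), IsBounded (⋂ i ∈ s, NbhdR (A i) R)

/-- A complex-valued function on a metric space is slowly oscillating. -/
def SlowlyOscillating {X : Type*} [MetricSpace X] (φ : X → ℂ) : Prop :=
  ∀ R > (0:ℝ), ∀ ε > (0:ℝ), ∃ A : Set X, IsBounded A ∧
    ∀ x : X, ∀ p ∈ closedBall x R \ A, ∀ p' ∈ closedBall x R \ A, dist (φ p) (φ p') ≤ ε
/-- The horizontal ray `A_k = [k,∞) × {k}`, inside `ℂ ≅ ℝ²`. -/
def Aray (k : ℕ) : Set ℂ := {z | z.im = (k:ℝ) ∧ (k:ℝ) ≤ z.re}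

/-- The vertical segment `B_k = {k} × [k-1,k]`, inside `ℂ ≅ ℝ²`. -/
def Bseg (k : ℕ) : Set ℂ := {z | z.re = (k:ℝ) ∧ (k:ℝ) - 1 ≤ z.im ∧ z.im ≤ (k:ℝ)}

/-- The tree `X = ⋃_{k ≥ 1} (A_k ∪ B_{k+1}) ⊆ ℝ²`. -/
def Xtree : Set ℂ := ⋃ k ∈ {k : ℕ | 1 ≤ k}, (Aray k ∪ Bseg (k + 1))

/-- The Euclidean length of a path in `X ⊆ ℝ² = ℂ`, i.e. its total variation. -/
noncomputable def pathLength {p q : Xtree} (γ : Path p q) : ENNReal :=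
  eVariationOn (fun t => ((γ t : Xtree) : ℂ)) Set.univ

/-- The path metric on `X`: the infimum of the Euclidean lengths of continuous
paths in `X` joining two given points (`∞` if there is none). -/
noncomputable def treePathDist (p q : Xtree) : ENNReal :=
  ⨅ γ : Path p q, pathLength γ

/-- The ray `A_k`, as a subset of the tree `X` (with its Euclidean metric). -/
def ArayX (k : ℕ) : Set Xtree := Subtype.val ⁻¹' Aray k

section Helpers2

/-- Straight segment path inside the tree. -/
noncomputable def seg (p q : Xtree)
    (h : ∀ t : ℝ, t ∈ Set.Icc (0:ℝ) 1 → ((1-t) • (p:ℂ) + t • (q:ℂ)) ∈ Xtree) :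
    Path p q where
  toFun t := ⟨(1 - (t:ℝ)) • (p:ℂ) + (t:ℝ) • (q:ℂ), h t t.2⟩
  continuous_toFun := by
    apply Continuous.subtype_mk
    fun_prop
  source' := by
    apply Subtype.ext
    simp
  target' := by
    apply Subtype.ext
    simp

lemma seg_lip (p q : Xtree) (h) :
    LipschitzWith ‖(q:ℂ) - (p:ℂ)‖₊ (fun t => ((seg p q h t : Xtree) : ℂ)) := by
  apply LipschitzWith.of_dist_le_mul
  intro s t
  show dist ((1 - (s:ℝ)) • (p:ℂ) + (s:ℝ) • (q:ℂ)) ((1 - (t:ℝ)) • (p:ℂ) + (t:ℝ) • (q:ℂ)) ≤ _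
  rw [dist_eq_norm]
  have key : ((1 - (s:ℝ)) • (p:ℂ) + (s:ℝ) • (q:ℂ)) - ((1 - (t:ℝ)) • (p:ℂ) + (t:ℝ) • (q:ℂ))
      = ((s:ℝ) - (t:ℝ)) • ((q:ℂ) - (p:ℂ)) := by
    module
  rw [key, norm_smul, Subtype.dist_eq, Real.dist_eq, Real.norm_eq_abs, coe_nnnorm]
  rw [mul_comm]

lemma lip_trans {x y z : Xtree} {γ : Path x y} {γ' : Path y z} {L₁ L₂ : NNReal}
    (h : LipschitzWith L₁ (fun t => ((γ t : Xtree) : ℂ)))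
    (h' : LipschitzWith L₂ (fun t => ((γ' t : Xtree) : ℂ))) :
    LipschitzWith (2 * (L₁ + L₂)) (fun t => (((γ.trans γ') t : Xtree) : ℂ)) := by
  have main : ∀ s t : unitInterval, (s:ℝ) ≤ t →
      dist (((γ.trans γ') s : Xtree) : ℂ) (((γ.trans γ') t : Xtree) : ℂ)
        ≤ (2 * ((L₁:ℝ) + L₂)) * dist s t := by
    intro s t hst
    have hd : dist s t = (t:ℝ) - s := by
      rw [Subtype.dist_eq, Real.dist_eq, abs_sub_comm, abs_of_nonneg (by linarith)]
    rcases le_or_gt (t:ℝ) (1/2) with ht | ht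
    · have hs : (s:ℝ) ≤ 1/2 := le_trans hst ht
      rw [Path.trans_apply, Path.trans_apply]
      simp only [hs, ht, dif_pos]
      calc dist ((γ ⟨2*s, _⟩ : Xtree) : ℂ) ((γ ⟨2*t, _⟩ : Xtree) : ℂ)
          ≤ (L₁:ℝ) * dist (⟨2*(s:ℝ), _⟩ : unitInterval) ⟨2*(t:ℝ), _⟩ := h.dist_le_mul _ _
        _ ≤ (2 * ((L₁:ℝ) + L₂)) * dist s t := by
            rw [Subtype.dist_eq, Real.dist_eq, hd]
            have : |2*(s:ℝ) - 2*(t:ℝ)| = 2*((t:ℝ) - s) := by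
              rw [abs_sub_comm, abs_of_nonneg (by linarith)]; ring
            rw [this]
            have hts : (0:ℝ) ≤ (t:ℝ) - s := by linarith
            nlinarith [mul_nonneg (NNReal.coe_nonneg L₁) hts, mul_nonneg (NNReal.coe_nonneg L₂) hts]
    · rcases lt_or_ge (1/2 : ℝ) (s:ℝ) with hs | hs
      · rw [Path.trans_apply, Path.trans_apply]
        simp only [not_le.2 hs, not_le.2 ht, dif_neg, not_false_iff]
        calc dist ((γ' ⟨2*s-1, _⟩ : Xtree) : ℂ) ((γ' ⟨2*t-1, _⟩ : Xtree) : ℂ)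
            ≤ (L₂:ℝ) * dist (⟨2*(s:ℝ)-1, _⟩ : unitInterval) ⟨2*(t:ℝ)-1, _⟩ := h'.dist_le_mul _ _
          _ ≤ (2 * ((L₁:ℝ) + L₂)) * dist s t := by
              rw [Subtype.dist_eq, Real.dist_eq, hd]
              have : |(2*(s:ℝ)-1) - (2*(t:ℝ)-1)| = 2*((t:ℝ) - s) := by
                rw [abs_sub_comm, abs_of_nonneg (by linarith)]; ring
              rw [this]
              have hts : (0:ℝ) ≤ (t:ℝ) - s := by linarith
              nlinarith [mul_nonneg (NNReal.coe_nonneg L₁) hts, mul_nonneg (NNReal.coe_nonneg L₂) hts]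
      · -- s ≤ 1/2 < t
        have h1 : dist (((γ.trans γ') s : Xtree) : ℂ) ((y : Xtree) : ℂ) ≤ (L₁:ℝ) * (1 - 2*(s:ℝ)) := by
          rw [Path.trans_apply]
          simp only [hs, dif_pos]
          have := h.dist_le_mul (⟨2*(s:ℝ), (unitInterval.mul_pos_mem_iff zero_lt_two).2 ⟨s.2.1, hs⟩⟩ : unitInterval) 1
          simp only [Path.target] at this
          calc dist ((γ ⟨2*s, _⟩ : Xtree) : ℂ) ((y : Xtree) : ℂ)
              ≤ (L₁:ℝ) * dist (⟨2*(s:ℝ), _⟩ : unitInterval) 1 := this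
            _ ≤ (L₁:ℝ) * (1 - 2*(s:ℝ)) := by
                rw [Subtype.dist_eq, Real.dist_eq]
                have : |2*(s:ℝ) - (1:unitInterval)| = 1 - 2*(s:ℝ) := by
                  rw [Set.Icc.coe_one, abs_sub_comm, abs_of_nonneg (by linarith)]
                rw [this]
        have h2 : dist ((y : Xtree) : ℂ) (((γ.trans γ') t : Xtree) : ℂ) ≤ (L₂:ℝ) * (2*(t:ℝ) - 1) := by
          rw [Path.trans_apply]
          simp only [not_le.2 ht, dif_neg, not_false_iff]
          have := h'.dist_le_mul 0 (⟨2*(t:ℝ)-1, unitInterval.two_mul_sub_one_mem_iff.2 ⟨ht.le, t.2.2⟩⟩ : unitInterval)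
          simp only [Path.source] at this
          calc dist ((y : Xtree) : ℂ) ((γ' ⟨2*t-1, _⟩ : Xtree) : ℂ)
              ≤ (L₂:ℝ) * dist (0 : unitInterval) ⟨2*(t:ℝ)-1, _⟩ := this
            _ ≤ (L₂:ℝ) * (2*(t:ℝ) - 1) := by
                rw [Subtype.dist_eq, Real.dist_eq]
                have : |((0:unitInterval):ℝ) - (2*(t:ℝ)-1)| = 2*(t:ℝ) - 1 := by
                  rw [Set.Icc.coe_zero, zero_sub, abs_neg, abs_of_nonneg (by linarith)]
                rw [this]
        calc dist (((γ.trans γ') s : Xtree) : ℂ) (((γ.trans γ') t : Xtree) : ℂ)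
            ≤ dist (((γ.trans γ') s : Xtree) : ℂ) ((y : Xtree) : ℂ)
              + dist ((y : Xtree) : ℂ) (((γ.trans γ') t : Xtree) : ℂ) := dist_triangle _ _ _
          _ ≤ (L₁:ℝ) * (1 - 2*(s:ℝ)) + (L₂:ℝ) * (2*(t:ℝ) - 1) := add_le_add h1 h2
          _ ≤ (2 * ((L₁:ℝ) + L₂)) * dist s t := by
              rw [hd]
              have e1 : (0:ℝ) ≤ 2*((t:ℝ) - s) - (1 - 2*(s:ℝ)) := by linarith
              have e2 : (0:ℝ) ≤ 2*((t:ℝ) - s) - (2*(t:ℝ) - 1) := by linarith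
              nlinarith [mul_nonneg (NNReal.coe_nonneg L₁) e1, mul_nonneg (NNReal.coe_nonneg L₂) e2]
  apply LipschitzWith.of_dist_le_mul
  have cast_eq : ((2 * (L₁ + L₂) : NNReal) : ℝ) = 2 * ((L₁:ℝ) + L₂) := by push_cast; ring
  intro s t
  rw [cast_eq]
  rcases le_total (s:ℝ) (t:ℝ) with hst | hst
  · exact main s t hst
  · simpa [dist_comm] using main t s hst

end Helpers2

section Helpers3

lemma pathLength_le_lip {p q : Xtree} (γ : Path p q) {L : NNReal}
    (h : LipschitzWith L (fun t => ((γ t : Xtree) : ℂ))) : pathLength γ ≤ (L : ENNReal) := by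
  rw [pathLength]
  refine iSup_le ?_
  rintro ⟨n, u, hu, -⟩
  simp only
  calc ∑ i ∈ Finset.range n, edist ((γ (u (i+1)) : Xtree) : ℂ) ((γ (u i) : Xtree) : ℂ)
      ≤ ∑ i ∈ Finset.range n, (L : ENNReal) * edist (u (i+1)) (u i) :=
        Finset.sum_le_sum (fun i _ => h.edist_le_mul _ _)
    _ = (L : ENNReal) * ∑ i ∈ Finset.range n, edist (u (i+1)) (u i) := by
        rw [Finset.mul_sum]
    _ ≤ (L : ENNReal) * 1 := by
        apply mul_le_mul_right
        have : ∀ i, edist (u (i+1)) (u i) = ENNReal.ofReal (((u (i+1)):ℝ) - ((u i):ℝ)) := by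
          intro i
          rw [edist_dist, Subtype.dist_eq, Real.dist_eq,
            abs_of_nonneg (by linarith [show ((u i):ℝ) ≤ ((u (i+1)):ℝ) from hu (Nat.le_succ i)])]
        simp only [this]
        rw [← ENNReal.ofReal_sum_of_nonneg (fun i _ => by
          linarith [show ((u i):ℝ) ≤ ((u (i+1)):ℝ) from hu (Nat.le_succ i)])]
        rw [Finset.sum_range_sub (fun i => ((u i):ℝ))]
        refine ENNReal.ofReal_le_one.2 ?_
        linarith [(u n).2.2, (u 0).2.1]
    _ = (L : ENNReal) := mul_one _

lemma Xtree_half' {z : ℂ} (hz : z ∈ Xtree) (m : ℕ) (him : z.im = (m:ℝ) + 1/2) :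
    z.re = (m:ℝ) + 1 := by
  simp only [Xtree, Set.mem_iUnion, Set.mem_setOf_eq] at hz
  obtain ⟨k, hk, hzk⟩ := hz
  rcases hzk with h | h
  · exfalso
    obtain ⟨h1, -⟩ := h
    rw [him] at h1
    rcases le_or_gt k m with h' | h'
    · have : (k:ℝ) ≤ m := by exact_mod_cast h'
      linarith
    · have : (m:ℝ) + 1 ≤ k := by exact_mod_cast h'
      linarith
  · obtain ⟨h1, h2, h3⟩ := h
    push_cast at h1 h2 h3
    rw [him] at h2 h3
    have hkm : k = m := by
      have : k ≤ m := by
        by_contra hc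
        have : (m:ℝ) + 1 ≤ k := by exact_mod_cast not_le.1 hc
        linarith
      have : m ≤ k := by
        by_contra hc
        have : (k:ℝ) + 1 ≤ m := by exact_mod_cast not_le.1 hc
        linarith
      omega
    subst hkm
    rw [h1]

lemma treePathDist_lower (z w : Xtree) (m : ℕ) (hz : (z:ℂ).im = (m:ℝ))
    (hw : (m:ℝ) + 1 ≤ (w:ℂ).im) :
    ENNReal.ofReal ((z:ℂ).re - ((m:ℝ) + 1)) ≤ treePathDist z w := by
  refine le_iInf fun γ => ?_
  set f : unitInterval → ℂ := fun t => ((γ t : Xtree) : ℂ) with hf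
  have hcont : Continuous fun t => (f t).im :=
    Complex.continuous_im.comp (continuous_subtype_val.comp γ.continuous)
  have hmem : ((m:ℝ) + 1/2) ∈ Set.Icc ((fun t => (f t).im) 0) ((fun t => (f t).im) 1) := by
    constructor
    · show (f 0).im ≤ _
      have : f 0 = (z:ℂ) := by rw [hf]; simp [γ.source]
      rw [this, hz]; linarith
    · show _ ≤ (f 1).im
      have : f 1 = (w:ℂ) := by rw [hf]; simp [γ.target]
      rw [this]; linarith
  obtain ⟨t, ht⟩ := intermediate_value_univ (0 : unitInterval) 1 hcont hmem
  have hre : (f t).re = (m:ℝ) + 1 := Xtree_half' (γ t).2 m ht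
  have key : edist (f 0) (f t) ≤ eVariationOn f Set.univ :=
    eVariationOn.edist_le f (Set.mem_univ _) (Set.mem_univ _)
  have hz0 : f 0 = (z:ℂ) := by rw [hf]; simp [γ.source]
  calc ENNReal.ofReal ((z:ℂ).re - ((m:ℝ)+1))
      ≤ edist (f 0) (f t) := by
        rw [edist_dist]
        apply ENNReal.ofReal_le_ofReal
        calc (z:ℂ).re - ((m:ℝ)+1) ≤ |(f 0).re - (f t).re| := by
              rw [hz0, hre]; exact le_abs_self _
          _ ≤ ‖f 0 - f t‖ := by
              rw [← Complex.sub_re]; exact Complex.abs_re_le_norm _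
          _ = dist (f 0) (f t) := (Complex.dist_eq _ _).symm
    _ ≤ eVariationOn f Set.univ := key
    _ = pathLength γ := rfl

end Helpers3
section Helpers4

def cpt (x y : ℝ) : ℂ := ⟨x, y⟩

@[simp] lemma cpt_re (x y : ℝ) : (cpt x y).re = x := rfl
@[simp] lemma cpt_im (x y : ℝ) : (cpt x y).im = y := rfl

lemma comb_cpt (t a b c d : ℝ) :
    (1-t) • cpt a b + t • cpt c d = cpt ((1-t)*a + t*c) ((1-t)*b + t*d) := by
  apply Complex.ext <;> simp [Complex.smul_re, Complex.smul_im]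

lemma sub_cpt (a b c d : ℝ) : cpt a b - cpt c d = cpt (a - c) (b - d) := by
  apply Complex.ext <;> simp

lemma dist_cpt_horiz (a b c : ℝ) : dist (cpt a c) (cpt b c) = |a - b| := by
  rw [Complex.dist_of_im_eq (z := cpt a c) (w := cpt b c) rfl]; exact Real.dist_eq a b

lemma norm_cpt_horiz (a : ℝ) : ‖cpt a 0‖ = |a| := by
  have : cpt a 0 = (a : ℂ) := Complex.ext rfl rfl
  rw [this, Complex.norm_real, Real.norm_eq_abs]

lemma mem_Xtree_of_Aray {k : ℕ} (hk : 1 ≤ k) {z : ℂ} (hz : z ∈ Aray k) : z ∈ Xtree :=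
  Set.mem_biUnion (show k ∈ {k : ℕ | 1 ≤ k} from hk) (Or.inl hz)

lemma mem_Xtree_of_Bseg {k : ℕ} (hk : 1 ≤ k) {z : ℂ} (hz : z ∈ Bseg (k+1)) : z ∈ Xtree :=
  Set.mem_biUnion (show k ∈ {k : ℕ | 1 ≤ k} from hk) (Or.inr hz)

lemma mem_Aray_iff (k : ℕ) (z : ℂ) : z ∈ Aray k ↔ z.im = (k:ℝ) ∧ (k:ℝ) ≤ z.re := Iff.rfl

lemma rootX_mem : cpt 1 1 ∈ Xtree := by
  apply mem_Xtree_of_Aray (le_refl 1)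
  constructor <;> simp

noncomputable def rootX : Xtree := ⟨cpt 1 1, rootX_mem⟩

lemma cpt_ray_mem {m : ℕ} (hm : 1 ≤ m) {x : ℝ} (hx : (m:ℝ) ≤ x) : cpt x (m:ℝ) ∈ Xtree := by
  apply mem_Xtree_of_Aray hm
  exact ⟨rfl, hx⟩

/-- Horizontal segment inside `A_m`. -/
lemma horiz_seg_mem {m : ℕ} (hm : 1 ≤ m) {x₁ x₂ : ℝ} (h1 : (m:ℝ) ≤ x₁) (h2 : (m:ℝ) ≤ x₂) :
    ∀ t : ℝ, t ∈ Set.Icc (0:ℝ) 1 →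
      ((1-t) • ((⟨cpt x₁ m, cpt_ray_mem hm h1⟩ : Xtree) : ℂ)
        + t • ((⟨cpt x₂ m, cpt_ray_mem hm h2⟩ : Xtree) : ℂ)) ∈ Xtree := by
  intro t ht
  show ((1-t) • cpt x₁ m + t • cpt x₂ m) ∈ Xtree
  rw [comb_cpt]
  apply mem_Xtree_of_Aray hm
  constructor
  · simp; ring
  · simp only [cpt_re]
    nlinarith [ht.1, ht.2]

/-- Vertical segment inside `B_{m+1}`. -/
lemma vert_seg_mem {m : ℕ} (hm : 1 ≤ m)
    (htop : cpt ((m:ℝ)+1) ((m:ℝ)+1) ∈ Xtree) (hbot : cpt ((m:ℝ)+1) (m:ℝ) ∈ Xtree) :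
    ∀ t : ℝ, t ∈ Set.Icc (0:ℝ) 1 →
      ((1-t) • ((⟨cpt ((m:ℝ)+1) (m:ℝ), hbot⟩ : Xtree) : ℂ)
        + t • ((⟨cpt ((m:ℝ)+1) ((m:ℝ)+1), htop⟩ : Xtree) : ℂ)) ∈ Xtree := by
  intro t ht
  show ((1-t) • cpt ((m:ℝ)+1) (m:ℝ) + t • cpt ((m:ℝ)+1) ((m:ℝ)+1)) ∈ Xtree
  rw [comb_cpt]
  apply mem_Xtree_of_Bseg hm
  refine ⟨?_, ?_, ?_⟩ <;> push_cast <;> simp only [cpt_re, cpt_im] <;> nlinarith [ht.1, ht.2]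

lemma junction_path (m : ℕ) (hm : 1 ≤ m) :
    ∃ (h : cpt (m:ℝ) (m:ℝ) ∈ Xtree) (γ : Path rootX ⟨cpt (m:ℝ) (m:ℝ), h⟩) (L : NNReal),
      LipschitzWith L (fun t => ((γ t : Xtree) : ℂ)) ∧ (L:ℝ) ≤ 6 ^ m := by
  induction m, hm using Nat.le_induction with
  | base =>
    refine ⟨by exact_mod_cast rootX_mem, ?_⟩
    have h1 : (⟨cpt ((1:ℕ):ℝ) ((1:ℕ):ℝ), by exact_mod_cast rootX_mem⟩ : Xtree) = rootX := by
      apply Subtype.ext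
      show cpt ((1:ℕ):ℝ) ((1:ℕ):ℝ) = cpt 1 1
      norm_num
    rw [h1]
    refine ⟨Path.refl rootX, 0, ?_, by norm_num⟩
    apply LipschitzWith.of_dist_le_mul
    intro s t
    simp [Path.refl]
    rfl
  | succ m hm ih =>
    obtain ⟨h, γ, L, hlip, hL⟩ := ih
    have hb : cpt ((m:ℝ)+1) (m:ℝ) ∈ Xtree := cpt_ray_mem hm (by linarith)
    have hb' : (m:ℝ) ≤ (m:ℝ)+1 := by linarith
    have htop : cpt ((m:ℝ)+1) ((m:ℝ)+1) ∈ Xtree := by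
      apply mem_Xtree_of_Bseg hm
      refine ⟨?_, ?_, ?_⟩ <;> push_cast <;> simp <;> norm_num
    have hm1 : cpt ((m+1:ℕ):ℝ) ((m+1:ℕ):ℝ) ∈ Xtree := by push_cast; exact htop
    refine ⟨hm1, ?_⟩
    have heq : (⟨cpt ((m+1:ℕ):ℝ) ((m+1:ℕ):ℝ), hm1⟩ : Xtree)
        = ⟨cpt ((m:ℝ)+1) ((m:ℝ)+1), htop⟩ := by
      apply Subtype.ext
      show cpt ((m+1:ℕ):ℝ) ((m+1:ℕ):ℝ) = cpt ((m:ℝ)+1) ((m:ℝ)+1)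
      push_cast
      rfl
    rw [heq]
    -- segment from (m,m) to (m+1,m)
    have seg1mem := horiz_seg_mem hm (le_refl (m:ℝ)) hb'
    have hmm : cpt (m:ℝ) (m:ℝ) ∈ Xtree := cpt_ray_mem hm le_rfl
    have hhb : (⟨cpt (m:ℝ) (m:ℝ), h⟩ : Xtree) = ⟨cpt (m:ℝ) (m:ℝ), hmm⟩ := rfl
    let seg1 : Path (⟨cpt (m:ℝ) (m:ℝ), h⟩ : Xtree) ⟨cpt ((m:ℝ)+1) (m:ℝ), cpt_ray_mem hm hb'⟩ :=
      seg _ _ (horiz_seg_mem hm le_rfl hb')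
    let seg2 : Path (⟨cpt ((m:ℝ)+1) (m:ℝ), cpt_ray_mem hm hb'⟩ : Xtree)
        ⟨cpt ((m:ℝ)+1) ((m:ℝ)+1), htop⟩ :=
      seg _ _ (vert_seg_mem hm htop (cpt_ray_mem hm hb'))
    refine ⟨(γ.trans seg1).trans seg2, 2 * ((2 * (L + _)) + _), lip_trans (lip_trans hlip (seg_lip _ _ _)) (seg_lip _ _ _), ?_⟩
    -- now bound the constant
    have n1 : ‖cpt ((m:ℝ)+1) (m:ℝ) - cpt (m:ℝ) (m:ℝ)‖ = 1 := by
      rw [sub_cpt]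
      simp only [add_sub_cancel_left, sub_self]
      rw [norm_cpt_horiz]
      norm_num
    have n2 : ‖cpt ((m:ℝ)+1) ((m:ℝ)+1) - cpt ((m:ℝ)+1) (m:ℝ)‖ = 1 := by
      rw [sub_cpt]
      simp only [sub_self, add_sub_cancel_left]
      have : cpt 0 1 = Complex.I := Complex.ext rfl rfl
      rw [this, Complex.norm_I]
    push_cast
    rw [n1, n2]
    have h6 : (6:ℝ) ≤ 6 ^ m := by
      calc (6:ℝ) = 6 ^ 1 := (pow_one 6).symm
      _ ≤ 6 ^ m := pow_le_pow_right₀ (by norm_num) hm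
    push_cast at hL
    rw [pow_succ]
    nlinarith

end Helpers4

section Helpers5

lemma dist_upper (m : ℕ) (hm : 1 ≤ m) (x : ℝ) (hx : (m:ℝ) ≤ x) :
    treePathDist rootX ⟨cpt x (m:ℝ), cpt_ray_mem hm hx⟩
      ≤ ENNReal.ofReal (2 * 6 ^ m + 2 * (x - m)) := by
  obtain ⟨h, γ, L, hlip, hL⟩ := junction_path m hm
  let seg3 : Path (⟨cpt (m:ℝ) (m:ℝ), h⟩ : Xtree) ⟨cpt x (m:ℝ), cpt_ray_mem hm hx⟩ :=
    seg _ _ (horiz_seg_mem hm le_rfl hx)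
  have hlip' := lip_trans hlip (seg_lip _ _ (horiz_seg_mem hm le_rfl hx))
  calc treePathDist rootX ⟨cpt x (m:ℝ), cpt_ray_mem hm hx⟩
      ≤ pathLength (γ.trans seg3) := iInf_le _ _
    _ ≤ ((2 * (L + ‖cpt x (m:ℝ) - cpt (m:ℝ) (m:ℝ)‖₊) : NNReal) : ENNReal) :=
        pathLength_le_lip _ hlip'
    _ ≤ ENNReal.ofReal (2 * 6 ^ m + 2 * (x - m)) := by
        rw [← ENNReal.ofReal_coe_nnreal]
        apply ENNReal.ofReal_le_ofReal
        push_cast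
        have hn : ‖cpt x (m:ℝ) - cpt (m:ℝ) (m:ℝ)‖ = x - m := by
          rw [sub_cpt, sub_self, norm_cpt_horiz, abs_of_nonneg (by linarith)]
        rw [hn]
        linarith

end Helpers5


/-- In the path metric `(X,d)` (realized as `T` via
`e : T ≃ X`), the countable collection `{A_k}_{k ≥ 1}` is gradually disjoint,
while in the Euclidean metric `(X,d_e)` the collection `{A_k}_{k ≥ 1}` does not
diverge (no finite subcollection diverges). -/
theorem tree_rays_graduallyDisjoint_not_divergent (T : Type*) [MetricSpace T]
    (e : T ≃ Xtree)
    (hd : ∀ p q : T, ENNReal.ofReal (dist p q) = treePathDist (e p) (e q)) :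
    GraduallyDisjointSeq (fun k : ℕ => (fun t : T => e t) ⁻¹' ArayX (k + 1)) ∧
      ¬ DivergesSeq (fun k : ℕ => ArayX (k + 1)) := by
  constructor
  · -- gradually disjoint in the path metric
    intro s R hR
    set t₀ : T := e.symm rootX with ht₀
    set K : ℕ := s.sup id + 1 with hK
    set Λ : ℝ := 2 * 6 ^ K + 2 * (2*R + 1) with hΛ
    refine ⟨Metric.closedBall t₀ (R + Λ), isBounded_closedBall, ?_⟩
    have key : ∀ i' j', i' ∈ s → j' ∈ s → i' < j' → ∀ p : T,
        p ∈ NbhdR ((fun t : T => e t) ⁻¹' ArayX (i'+1)) R →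
        p ∈ NbhdR ((fun t : T => e t) ⁻¹' ArayX (j'+1)) R →
        p ∈ Metric.closedBall t₀ (R + Λ) := by
      intro i' j' hi hj hij p hpi hpj
      obtain ⟨a, ha, hpa⟩ := hpi
      obtain ⟨b, hb, hpb⟩ := hpj
      have haA : ((e a : Xtree) : ℂ) ∈ Aray (i'+1) := ha
      have hbA : ((e b : Xtree) : ℂ) ∈ Aray (j'+1) := hb
      have hm : 1 ≤ i' + 1 := Nat.le_add_left 1 i'
      have him : ((e a : Xtree) : ℂ).im = ((i'+1:ℕ):ℝ) := haA.1
      have hre : ((i'+1:ℕ):ℝ) ≤ ((e a : Xtree) : ℂ).re := haA.2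
      have hwim : ((i'+1:ℕ):ℝ) + 1 ≤ ((e b : Xtree) : ℂ).im := by
        rw [hbA.1]
        push_cast
        have : (i':ℝ) + 1 ≤ (j':ℝ) := by exact_mod_cast hij
        linarith
      have hdab : dist a b ≤ 2 * R := by
        calc dist a b ≤ dist a p + dist p b := dist_triangle _ _ _
          _ ≤ R + R := add_le_add (by rwa [dist_comm]) hpb
          _ = 2*R := by ring
      have hlow := treePathDist_lower (e a) (e b) (i'+1) him hwim
      rw [← hd a b] at hlow
      have hxb : ((e a : Xtree) : ℂ).re - (((i'+1:ℕ):ℝ)+1) ≤ 2*R :=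
        (ENNReal.ofReal_le_ofReal_iff (by positivity)).1
          (le_trans hlow (ENNReal.ofReal_le_ofReal hdab))
      set x := ((e a : Xtree) : ℂ).re with hxdef
      have hzeq : e a = (⟨cpt x ((i'+1:ℕ):ℝ), cpt_ray_mem hm hre⟩ : Xtree) := by
        apply Subtype.ext
        apply Complex.ext
        · rfl
        · exact him
      have hup := dist_upper (i'+1) hm x hre
      have hofr : ENNReal.ofReal (dist t₀ a)
          ≤ ENNReal.ofReal (2*6^(i'+1) + 2*(x - ((i'+1:ℕ):ℝ))) := by
        rw [hd t₀ a, ht₀, e.apply_symm_apply, hzeq]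
        exact hup
      have hta : dist t₀ a ≤ 2*6^(i'+1) + 2*(x - ((i'+1:ℕ):ℝ)) := by
        refine (ENNReal.ofReal_le_ofReal_iff ?_).1 hofr
        have h6 : (0:ℝ) < 6^(i'+1) := pow_pos (by norm_num) _
        linarith
      have hiK : i' + 1 ≤ K := by
        rw [hK]
        have : i' ≤ s.sup id := Finset.le_sup (f := id) hi
        omega
      have h6K : (6:ℝ)^(i'+1) ≤ 6^K := pow_le_pow_right₀ (by norm_num) hiK
      rw [Metric.mem_closedBall]
      calc dist p t₀ ≤ dist p a + dist a t₀ := dist_triangle _ _ _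
        _ ≤ R + (2*6^(i'+1) + 2*(x - ((i'+1:ℕ):ℝ))) :=
            add_le_add hpa (by rwa [dist_comm])
        _ ≤ R + Λ := by
            rw [hΛ]
            have : x - (((i'+1:ℕ):ℝ)) ≤ 2*R + 1 := by linarith
            linarith
    intro i hi j hj hij
    rw [Set.disjoint_left]
    rintro p ⟨hpi, hpB⟩ ⟨hpj, -⟩
    refine hpB ?_
    rcases hij.lt_or_gt with h | h
    · exact key i j hi hj h p hpi hpj
    · exact key j i hj hi h p hpj hpi
  · -- does not diverge in the Euclidean metric
    rintro ⟨s, hs⟩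
    set k0 : ℕ := s.sup id with hk0
    have hb := hs ((k0:ℝ) + 2) (by positivity)
    rw [Metric.isBounded_iff] at hb
    obtain ⟨C, hC⟩ := hb
    have hmem : ∀ x : ℝ, (k0:ℝ) + 1 ≤ x → ∃ (h : cpt x ((k0:ℝ)+1) ∈ Xtree),
        (⟨cpt x ((k0:ℝ)+1), h⟩ : Xtree) ∈ ⋂ i ∈ s, NbhdR (ArayX (i+1)) ((k0:ℝ)+2) := by
      intro x hx
      have h1k : 1 ≤ k0 + 1 := Nat.le_add_left 1 k0
      have hcast : ((k0+1:ℕ):ℝ) = (k0:ℝ)+1 := by push_cast; ring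
      have hxk : ((k0+1:ℕ):ℝ) ≤ x := by rw [hcast]; linarith
      have hX : cpt x ((k0:ℝ)+1) ∈ Xtree := by
        rw [← hcast]; exact cpt_ray_mem h1k hxk
      refine ⟨hX, ?_⟩
      simp only [Set.mem_iInter]
      intro i hi
      have hik : (i:ℝ) ≤ (k0:ℝ) := by
        exact_mod_cast Finset.le_sup (f := id) hi
      have hicast : ((i+1:ℕ):ℝ) = (i:ℝ)+1 := by push_cast; ring
      have hix : ((i+1:ℕ):ℝ) ≤ x := by rw [hicast]; linarith
      have hiX : cpt x ((i:ℝ)+1) ∈ Xtree := by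
        rw [← hicast]; exact cpt_ray_mem (Nat.le_add_left 1 i) hix
      refine ⟨⟨cpt x ((i:ℝ)+1), hiX⟩, ?_, ?_⟩
      · show cpt x ((i:ℝ)+1) ∈ Aray (i+1)
        exact ⟨by rw [hicast]; exact cpt_im _ _, by rw [hicast]; simp only [cpt_re]; linarith⟩
      · rw [Subtype.dist_eq]
        show dist (cpt x ((k0:ℝ)+1)) (cpt x ((i:ℝ)+1)) ≤ (k0:ℝ)+2
        rw [Complex.dist_of_re_eq (z := cpt x ((k0:ℝ)+1)) (w := cpt x ((i:ℝ)+1)) rfl]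
        simp only [cpt_im]
        rw [Real.dist_eq, abs_of_nonneg (by linarith)]
        linarith
    obtain ⟨h1, hm1⟩ := hmem ((k0:ℝ)+1) le_rfl
    obtain ⟨h2, hm2⟩ := hmem ((k0:ℝ)+1+(|C|+1)) (by linarith [abs_nonneg C])
    have hle := hC hm1 hm2
    rw [Subtype.dist_eq] at hle
    have : dist (cpt ((k0:ℝ)+1) ((k0:ℝ)+1)) (cpt ((k0:ℝ)+1+(|C|+1)) ((k0:ℝ)+1)) = |C|+1 := by
      rw [dist_cpt_horiz]
      rw [abs_sub_comm, abs_of_nonneg (by linarith [abs_nonneg C])]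
      ring
    rw [this] at hle
    linarith [le_abs_self C]
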